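/- Let (X, μ, T) be an invertible measure-preserving system, a : ℕ → ℤ a sequence, and f ∈ L^∞(μ) with ∫ f dμ = 0. Suppose limsup_{N→∞} ‖Avg_{n∈[N]} T^{a(n)} f‖_{L²(μ)} > 0. Then there exist N_k → ∞ and a function f̃ ∈ L^∞(μ) with ∫ f̃ dμ = 0 such that f̃ is a weak L² limit of averages of the form Avg_{n∈[N_k]} T^{−a(n)} conj(g_k) with ‖g_k‖_∞ uniformly bounded, ∫ f · f̃ dμ > 0, and limsup_{k→∞} ‖Avg_{n∈[N_k]} T^{a(n)} f̃‖_{L²(μ)} > 0. -/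

import Mathlib

open MeasureTheory Filter Topology

local notation "⟪" x ", " y "⟫" => @inner ℂ _ _ x y

theorem weak_seq_compact {E : Type*} [NormedAddCommGroup E] [InnerProductSpace ℂ E]
    [CompleteSpace E] (u : ℕ → E) (C : ℝ) (hu : ∀ k, ‖u k‖ ≤ C) :
    ∃ (φ : ℕ → ℕ) (v : E), StrictMono φ ∧
      ∀ w : E, Tendsto (fun k => ⟪u (φ k), w⟫) atTop (𝓝 ⟪v, w⟫) := by
  have hC : 0 ≤ C := le_trans (norm_nonneg _) (hu 0)
  -- Step 1: diagonal extraction via compactness of product of balls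
  set y : ℕ → (ℕ → ℂ) := fun k j => ⟪u k, u j⟫ with hy
  have hyS : ∀ k, y k ∈ Set.univ.pi (fun _ : ℕ => Metric.closedBall (0:ℂ) (C*C)) := by
    intro k j _
    simp only [Metric.mem_closedBall, dist_zero_right]
    exact (norm_inner_le_norm _ _).trans (mul_le_mul (hu k) (hu j) (norm_nonneg _) hC)
  obtain ⟨L, -, φ, hφ, hL⟩ := (isCompact_univ_pi
    (fun _ : ℕ => isCompact_closedBall (0:ℂ) (C*C))).tendsto_subseq hyS
  have hLj : ∀ j, Tendsto (fun k => ⟪u (φ k), u j⟫) atTop (𝓝 (L j)) := by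
    intro j
    exact (tendsto_pi_nhds.1 hL) j
  -- Step 2: convergence on span
  have hspan : ∀ w ∈ Submodule.span ℂ (Set.range u),
      ∃ c : ℂ, Tendsto (fun k => ⟪u (φ k), w⟫) atTop (𝓝 c) := by
    intro w hw
    induction hw using Submodule.span_induction with
    | mem x hx =>
      obtain ⟨j, rfl⟩ := hx
      exact ⟨L j, hLj j⟩
    | zero => exact ⟨0, by simpa using tendsto_const_nhds⟩
    | add x y hx hy ihx ihy =>
      obtain ⟨cx, hcx⟩ := ihx; obtain ⟨cy, hcy⟩ := ihy
      exact ⟨cx + cy, by simpa [inner_add_right] using hcx.add hcy⟩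
    | smul a x hx ih =>
      obtain ⟨cx, hcx⟩ := ih
      exact ⟨a * cx, by simpa [inner_smul_right] using hcx.const_mul a⟩
  -- Step 3: Cauchy on closure of span
  set D := (Submodule.span ℂ (Set.range u)).topologicalClosure with hD
  have hclos : ∀ w ∈ D, CauchySeq (fun k => ⟪u (φ k), w⟫) := by
    intro w hw
    rw [Metric.cauchySeq_iff']
    intro ε hε
    have hδ : 0 < ε / 3 / (C + 1) := by positivity
    obtain ⟨w', hw'mem, hw'close⟩ : ∃ w' ∈ Submodule.span ℂ (Set.range u), ‖w - w'‖ < ε / 3 / (C + 1) := by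
      have : w ∈ closure ((Submodule.span ℂ (Set.range u) : Submodule ℂ E) : Set E) := hw
      rw [Metric.mem_closure_iff] at this
      obtain ⟨w', hw'1, hw'2⟩ := this _ hδ
      exact ⟨w', hw'1, by rwa [← dist_eq_norm]⟩
    obtain ⟨c, hc⟩ := hspan w' hw'mem
    have hcs : CauchySeq (fun k => ⟪u (φ k), w'⟫) := hc.cauchySeq
    rw [Metric.cauchySeq_iff'] at hcs
    obtain ⟨N, hN⟩ := hcs (ε / 3) (by positivity)
    refine ⟨N, fun n hn => ?_⟩
    have key : ∀ m, ‖⟪u (φ m), w⟫ - ⟪u (φ m), w'⟫‖ ≤ ε / 3 := by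
      intro m
      rw [← inner_sub_right]
      refine (norm_inner_le_norm _ _).trans ?_
      have h1 : ‖u (φ m)‖ * ‖w - w'‖ ≤ (C + 1) * (ε / 3 / (C + 1)) :=
        mul_le_mul ((hu _).trans (by linarith)) hw'close.le (norm_nonneg _) (by positivity)
      rw [mul_div_cancel₀] at h1
      · exact h1
      · positivity
    have h2 := hN n hn
    rw [dist_eq_norm] at h2 ⊢
    calc ‖⟪u (φ n), w⟫ - ⟪u (φ N), w⟫‖
        = ‖(⟪u (φ n), w⟫ - ⟪u (φ n), w'⟫) + (⟪u (φ n), w'⟫ - ⟪u (φ N), w'⟫)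
            + (⟪u (φ N), w'⟫ - ⟪u (φ N), w⟫)‖ := by ring_nf
      _ ≤ ‖⟪u (φ n), w⟫ - ⟪u (φ n), w'⟫‖ + ‖⟪u (φ n), w'⟫ - ⟪u (φ N), w'⟫‖
            + ‖⟪u (φ N), w'⟫ - ⟪u (φ N), w⟫‖ := norm_add₃_le
      _ < ε := by
          have := key n
          have h3 : ‖⟪u (φ N), w'⟫ - ⟪u (φ N), w⟫‖ ≤ ε / 3 := by
            rw [norm_sub_rev]; exact key N
          linarith
  -- Step 4: convergence everywhere via orthogonal projection
  haveI : CompleteSpace D := (Submodule.isClosed_topologicalClosure _).completeSpace_coe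
  have conv : ∀ w : E, ∃ c : ℂ, Tendsto (fun k => ⟪u (φ k), w⟫) atTop (𝓝 c) := by
    intro w
    have hmemD : ∀ k, u k ∈ D :=
      fun k => Submodule.le_topologicalClosure _ (Submodule.subset_span ⟨k, rfl⟩)
    have hPw : ((D.orthogonalProjectionOnto w : D) : E) ∈ D := (D.orthogonalProjectionOnto w).2
    obtain ⟨c, hc⟩ := cauchySeq_tendsto_of_complete (hclos _ hPw)
    refine ⟨c, ?_⟩
    have horth : ∀ k, ⟪u (φ k), w - ((D.orthogonalProjectionOnto w : D) : E)⟫ = 0 := by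
      intro k
      have h := Submodule.sub_starProjection_mem_orthogonal (K := D) w
      exact (Submodule.mem_orthogonal D _).1 h _ (hmemD (φ k))
    have : ∀ k, ⟪u (φ k), w⟫ = ⟪u (φ k), ((D.orthogonalProjectionOnto w : D) : E)⟫ := by
      intro k
      have := horth k
      rw [inner_sub_right, sub_eq_zero] at this
      exact this
    simpa only [this] using hc
  -- Step 5: build the functional and apply Riesz
  choose c hc using conv
  have cadd : ∀ w w', c (w + w') = c w + c w' := by
    intro w w'
    refine tendsto_nhds_unique ?_ ((hc w).add (hc w'))
    simpa [inner_add_right] using hc (w + w')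
  have csmul : ∀ (a : ℂ) (w : E), c (a • w) = a * c w := by
    intro a w
    refine tendsto_nhds_unique ?_ ((hc w).const_mul a)
    simpa [inner_smul_right] using hc (a • w)
  have cbound : ∀ w, ‖c w‖ ≤ C * ‖w‖ := by
    intro w
    refine le_of_tendsto (hc w).norm (Eventually.of_forall fun k => ?_)
    exact (norm_inner_le_norm _ _).trans (mul_le_mul_of_nonneg_right (hu _) (norm_nonneg _))
  let Lmap : E →ₗ[ℂ] ℂ := { toFun := c, map_add' := cadd, map_smul' := csmul }
  let Lc : E →L[ℂ] ℂ := Lmap.mkContinuous C cbound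
  refine ⟨φ, (InnerProductSpace.toDual ℂ E).symm Lc, hφ, fun w => ?_⟩
  have hv : ⟪((InnerProductSpace.toDual ℂ E).symm Lc : E), w⟫ = c w := by
    rw [← InnerProductSpace.toDual_apply_apply, LinearIsometryEquiv.apply_symm_apply]
    rfl
  rw [hv]
  exact hc w

noncomputable def ergAvg {X : Type*} (T : ℤ → X → X) (a : ℕ → ℤ) (F : X → ℂ) (N : ℕ) (x : X) : ℂ :=
  (N : ℂ)⁻¹ * ∑ n ∈ Finset.Icc 1 N, F (T (a n) x)

open ComplexConjugate

section Main

variable {X : Type*} [MeasurableSpace X] (μ : Measure X) [IsProbabilityMeasure μ]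
  (T : ℤ → X → X) (a : ℕ → ℤ)

theorem erg_int_comp (hT : ∀ n, MeasurePreserving (T n) μ μ)
    (hT0 : T 0 = id) (hTadd : ∀ m n, T (m + n) = T m ∘ T n)
    (n : ℤ) (g : X → ℂ) : ∫ x, g (T n x) ∂μ = ∫ x, g x ∂μ := by
  have hTinv1 : ∀ (n : ℤ) (x : X), T (-n) (T n x) = x := fun n x => by
    have h := congrFun (hTadd (-n) n) x
    rw [neg_add_cancel, hT0] at h; exact h.symm
  have hTinv2 : ∀ (n : ℤ) (x : X), T n (T (-n) x) = x := fun n x => by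
    have h := congrFun (hTadd n (-n)) x
    rw [add_neg_cancel, hT0] at h; exact h.symm
  exact (hT n).integral_comp
    (MeasurableEquiv.measurableEmbedding
      ⟨⟨T n, T (-n), hTinv1 n, hTinv2 n⟩, (hT n).measurable, (hT (-n)).measurable⟩) g

theorem erg_ae_fwd (hT : ∀ n, MeasurePreserving (T n) μ μ) (n : ℤ) {p : X → Prop}
    (hp : ∀ᵐ x ∂μ, p x) : ∀ᵐ x ∂μ, p (T n x) :=
  ((hT n).quasiMeasurePreserving.tendsto_ae).eventually hp

theorem erg_avg_aesm (hT : ∀ n, MeasurePreserving (T n) μ μ) (b : ℕ → ℤ) {p : X → ℂ}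
    (hp : AEStronglyMeasurable p μ) (N : ℕ) : AEStronglyMeasurable (ergAvg T b p N) μ := by
  unfold ergAvg
  exact (Finset.aestronglyMeasurable_fun_sum _ fun n _ =>
    hp.comp_quasiMeasurePreserving (hT (b n)).quasiMeasurePreserving).const_mul _

theorem erg_avg_bound (hT : ∀ n, MeasurePreserving (T n) μ μ) (b : ℕ → ℤ) {p : X → ℂ} {D : ℝ}
    (hD : 0 ≤ D) (hp : ∀ᵐ x ∂μ, ‖p x‖ ≤ D) (N : ℕ) : ∀ᵐ x ∂μ, ‖ergAvg T b p N x‖ ≤ D := by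
  have h1 : ∀ᵐ x ∂μ, ∀ n ∈ Finset.Icc 1 N, ‖p (T (b n) x)‖ ≤ D :=
    (Filter.eventually_all_finset _).2 fun n _ => erg_ae_fwd μ T hT (b n) hp
  filter_upwards [h1] with x hx
  unfold ergAvg
  rcases Nat.eq_zero_or_pos N with h0 | hpos
  · simp [h0, hD]
  have hN : (N : ℝ) ≠ 0 := Nat.cast_ne_zero.2 hpos.ne'
  calc ‖(N : ℂ)⁻¹ * ∑ n ∈ Finset.Icc 1 N, p (T (b n) x)‖
      = (N : ℝ)⁻¹ * ‖∑ n ∈ Finset.Icc 1 N, p (T (b n) x)‖ := by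
        rw [norm_mul, norm_inv, Complex.norm_natCast]
    _ ≤ (N : ℝ)⁻¹ * ((Finset.Icc 1 N).card • D) := by
        gcongr
        exact (norm_sum_le _ _).trans (Finset.sum_le_card_nsmul _ _ D hx)
    _ = D := by
        rw [Nat.card_Icc, nsmul_eq_mul]
        push_cast
        field_simp

theorem erg_swap (hT : ∀ n, MeasurePreserving (T n) μ μ)
    (hT0 : T 0 = id) (hTadd : ∀ m n, T (m + n) = T m ∘ T n)
    (N : ℕ) (p q : X → ℂ) (C D : ℝ)
    (hpm : AEStronglyMeasurable p μ) (hpb : ∀ᵐ x ∂μ, ‖p x‖ ≤ C)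
    (hqm : AEStronglyMeasurable q μ) (hqb : ∀ᵐ x ∂μ, ‖q x‖ ≤ D) :
    ∫ x, ergAvg T (fun n => -(a n)) p N x * q x ∂μ
      = ∫ y, p y * ergAvg T a q N y ∂μ := by
  have hTinv1 : ∀ (n : ℤ) (x : X), T (-n) (T n x) = x := fun n x => by
    have h := congrFun (hTadd (-n) n) x
    rw [neg_add_cancel, hT0] at h; exact h.symm
  have hqint : Integrable q μ := (memLp_top_of_bound hqm D hqb).integrable le_top
  have hpint : Integrable p μ := (memLp_top_of_bound hpm C hpb).integrable le_top
  have hterm : ∀ n : ℤ, Integrable (fun x => p (T n x) * q x) μ :=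
    fun n => hqint.bdd_mul (hpm.comp_quasiMeasurePreserving (hT n).quasiMeasurePreserving)
      (erg_ae_fwd μ T hT n hpb)
  have hterm2 : ∀ n : ℤ, Integrable (fun x => p x * q (T n x)) μ := by
    intro n
    have := ((memLp_top_of_bound
      (hqm.comp_quasiMeasurePreserving (hT n).quasiMeasurePreserving) D
      (erg_ae_fwd μ T hT n hqb)).integrable le_top).bdd_mul hpm hpb
    exact this
  calc ∫ x, ergAvg T (fun n => -(a n)) p N x * q x ∂μ
      = ∫ x, (N : ℂ)⁻¹ * ∑ n ∈ Finset.Icc 1 N, p (T (-(a n)) x) * q x ∂μ := by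
        refine integral_congr_ae (Eventually.of_forall fun x => ?_)
        simp only [ergAvg, mul_assoc, Finset.sum_mul]
    _ = (N : ℂ)⁻¹ * ∑ n ∈ Finset.Icc 1 N, ∫ x, p (T (-(a n)) x) * q x ∂μ := by
        rw [integral_const_mul, integral_finset_sum _ fun n _ => hterm (-(a n))]
    _ = (N : ℂ)⁻¹ * ∑ n ∈ Finset.Icc 1 N, ∫ y, p y * q (T (a n) y) ∂μ := by
        congr 1
        refine Finset.sum_congr rfl fun n _ => ?_
        rw [← erg_int_comp μ T hT hT0 hTadd (a n) (fun x => p (T (-(a n)) x) * q x)]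
        refine integral_congr_ae (Eventually.of_forall fun y => ?_)
        simp only [hTinv1]
    _ = ∫ y, p y * ergAvg T a q N y ∂μ := by
        rw [← integral_finset_sum _ fun n _ => hterm2 (a n), ← integral_const_mul]
        refine integral_congr_ae (Eventually.of_forall fun y => ?_)
        simp only [ergAvg, Finset.mul_sum]
        refine Finset.sum_congr rfl fun n _ => by ring

end Main

noncomputable def GG {X : Type*} (T : ℤ → X → X) (a : ℕ → ℤ) (f : X → ℂ) : ℕ → X → ℂ :=
  ergAvg T a f

noncomputable def HH {X : Type*} (T : ℤ → X → X) (a : ℕ → ℤ) (f : X → ℂ) (N : ℕ) : X → ℂ :=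
  ergAvg T (fun n => -(a n)) (fun y => conj (GG T a f N y)) N

set_option maxHeartbeats 1000000 in
/-- If `∫ f dμ = 0` and `limsup_N ‖𝔼_{n ∈ [N]} T^{a(n)} f‖_{L²(μ)} > 0`, then there exist
`N_k → ∞` and `f̃ ∈ L^∞(μ)` with `∫ f̃ dμ = 0` such that `f̃` is a weak `L²` limit of averages
`𝔼_{n ∈ [N_k]} T^{−a(n)} conj(g_k)` with `‖g_k‖_∞` uniformly bounded, `∫ f ⋅ f̃ dμ > 0`, and
`limsup_k ‖𝔼_{n ∈ [N_k]} T^{a(n)} f̃‖_{L²(μ)} > 0`. -/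
theorem stmt19 {X : Type*} [MeasurableSpace X] (μ : Measure X) [IsProbabilityMeasure μ]
    (T : ℤ → X → X) (hT : ∀ n, MeasurePreserving (T n) μ μ)
    (hT0 : T 0 = id) (hTadd : ∀ m n, T (m + n) = T m ∘ T n)
    (a : ℕ → ℤ) (f : X → ℂ) (hfL : MemLp f ⊤ μ) (hf0 : ∫ x, f x ∂μ = 0)
    (hbig : 0 < Filter.limsup (fun N : ℕ =>
      ∫ x, ‖(N : ℂ)⁻¹ * ∑ n ∈ Finset.Icc 1 N, f (T (a n) x)‖ ^ 2 ∂μ) Filter.atTop) :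
    ∃ (Nk : ℕ → ℕ) (g : ℕ → X → ℂ) (ft : X → ℂ) (B : ℝ),
      Tendsto Nk atTop atTop ∧
      (∀ k, MemLp (g k) ⊤ μ ∧ ∀ᵐ x ∂μ, ‖g k x‖ ≤ B) ∧
      MemLp ft ⊤ μ ∧ (∫ x, ft x ∂μ = 0) ∧
      (∀ h : X → ℂ, MemLp h 2 μ →
        Tendsto (fun k : ℕ => ∫ x, ((Nk k : ℂ)⁻¹ * ∑ n ∈ Finset.Icc 1 (Nk k),
            (starRingEnd ℂ) (g k (T (-(a n)) x))) * (starRingEnd ℂ) (h x) ∂μ)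
          atTop (nhds (∫ x, ft x * (starRingEnd ℂ) (h x) ∂μ))) ∧
      0 < (∫ x, f x * ft x ∂μ).re ∧
      0 < Filter.limsup (fun k : ℕ =>
        ∫ x, ‖(Nk k : ℂ)⁻¹ * ∑ n ∈ Finset.Icc 1 (Nk k), ft (T (a n) x)‖ ^ 2 ∂μ)
        Filter.atTop := by
  classical
  have hfm : AEStronglyMeasurable f μ := hfL.1
  obtain ⟨C₀, hC₀0, hfC₀⟩ : ∃ C₀ : ℝ, 0 ≤ C₀ ∧ ∀ᵐ x ∂μ, ‖f x‖ ≤ C₀ := by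
    refine ⟨(eLpNorm f ⊤ μ).toReal, ENNReal.toReal_nonneg, ?_⟩
    have h1 := ae_le_eLpNormEssSup (f := f) (μ := μ)
    have h2 : eLpNormEssSup f μ ≠ ⊤ := by
      rw [← eLpNorm_exponent_top]; exact hfL.2.ne
    filter_upwards [h1] with x hx
    have h3 := ENNReal.toReal_mono h2 hx
    simpa [← eLpNorm_exponent_top] using h3
  set C : ℝ := C₀ + 1 with hCdef
  have hC : 0 < C := by positivity
  have hfC : ∀ᵐ x ∂μ, ‖f x‖ ≤ C := hfC₀.mono fun x hx => by simp only [hCdef]; linarith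
  have hGm : ∀ N, AEStronglyMeasurable (GG T a f N) μ := fun N => erg_avg_aesm μ T hT a hfm N
  have hGb : ∀ N, ∀ᵐ x ∂μ, ‖GG T a f N x‖ ≤ C := fun N => erg_avg_bound μ T hT a hC.le hfC N
  have hGmc : ∀ N, AEStronglyMeasurable (fun y => conj (GG T a f N y)) μ := fun N =>
    Complex.continuous_conj.comp_aestronglyMeasurable (hGm N)
  have hGbc : ∀ N, ∀ᵐ x ∂μ, ‖conj (GG T a f N x)‖ ≤ C := fun N =>
    (hGb N).mono fun x hx => by simpa using hx
  have hHm : ∀ N, AEStronglyMeasurable (HH T a f N) μ := fun N =>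
    erg_avg_aesm μ T hT _ (hGmc N) N
  have hHb : ∀ N, ∀ᵐ x ∂μ, ‖HH T a f N x‖ ≤ C := fun N =>
    erg_avg_bound μ T hT _ hC.le (hGbc N) N
  have hsqint : ∀ (r : X → ℂ) (D : ℝ), AEStronglyMeasurable r μ → (∀ᵐ x ∂μ, ‖r x‖ ≤ D) →
      Integrable (fun x => ‖r x‖ ^ 2) μ := by
    intro r D hm hb
    refine (memLp_top_of_bound ((hm.norm.mul hm.norm).congr
      (Eventually.of_forall fun x => (pow_two ‖r x‖).symm)) (D ^ 2) ?_).integrable le_top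
    filter_upwards [hb] with x hx
    rw [Real.norm_eq_abs, abs_of_nonneg (by positivity)]
    exact pow_le_pow_left₀ (norm_nonneg _) hx 2
  have hsqle : ∀ (r : X → ℂ), AEStronglyMeasurable r μ → (∀ᵐ x ∂μ, ‖r x‖ ≤ C) →
      ∫ x, ‖r x‖ ^ 2 ∂μ ≤ C ^ 2 := by
    intro r hm hb
    refine le_trans (integral_mono_ae (hsqint r C hm hb) (integrable_const (C ^ 2)) ?_) ?_
    · filter_upwards [hb] with x hx
      exact pow_le_pow_left₀ (norm_nonneg _) hx 2
    · simp
  set s : ℕ → ℝ := fun N => ∫ x, ‖GG T a f N x‖ ^ 2 ∂μ with hsdef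
  have hs0 : ∀ N, 0 ≤ s N := fun N => integral_nonneg fun x => by positivity
  have hbig' : 0 < Filter.limsup s atTop := by
    have : s = fun N : ℕ => ∫ x, ‖(N : ℂ)⁻¹ * ∑ n ∈ Finset.Icc 1 N, f (T (a n) x)‖ ^ 2 ∂μ := by
      funext N
      simp only [hsdef, GG, ergAvg]
    rw [this]
    exact hbig
  obtain ⟨b, hb0, hbl⟩ : ∃ b : ℝ, 0 < b ∧ b < Filter.limsup s atTop :=
    ⟨_, half_pos hbig', half_lt_self hbig'⟩
  have hcobdd : Filter.IsCoboundedUnder (· ≤ ·) atTop s :=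
    (Filter.isBoundedUnder_of (r := (· ≥ ·)) ⟨0, fun N => hs0 N⟩).isCoboundedUnder_le
  obtain ⟨φ₁, hφ₁, hφ₁b⟩ :=
    Filter.extraction_of_frequently_atTop (Filter.frequently_lt_of_lt_limsup hcobdd hbl)
  have hHL2 : ∀ N, MemLp (HH T a f N) 2 μ := fun N =>
    (memLp_top_of_bound (hHm N) C (hHb N)).mono_exponent le_top
  have hnormsq : ∀ (r : X → ℂ) (hr : MemLp r 2 μ),
      (‖MemLp.toLp r hr‖ : ℝ) ^ 2 = ∫ x, ‖r x‖ ^ 2 ∂μ := by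
    intro r hr
    have h1 : ⟪MemLp.toLp r hr, MemLp.toLp r hr⟫ = ((∫ x, ‖r x‖ ^ 2 ∂μ : ℝ) : ℂ) := by
      rw [L2.inner_def,
        show ((∫ x, ‖r x‖ ^ 2 ∂μ : ℝ) : ℂ) = ∫ x, ((‖r x‖ ^ 2 : ℝ) : ℂ) ∂μ from integral_ofReal.symm]
      refine integral_congr_ae ?_
      filter_upwards [hr.coeFn_toLp] with x hx
      rw [RCLike.inner_apply, hx, RCLike.mul_conj]
      norm_cast
    have h2 := inner_self_eq_norm_sq (𝕜 := ℂ) (MemLp.toLp r hr)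
    rw [← h2, h1]
    simp
  have huub : ∀ k, ‖MemLp.toLp (HH T a f (φ₁ k)) (hHL2 (φ₁ k))‖ ≤ C := by
    intro k
    have h1 : ‖MemLp.toLp (HH T a f (φ₁ k)) (hHL2 (φ₁ k))‖ ^ 2 ≤ C ^ 2 := by
      rw [hnormsq]
      exact hsqle _ (hHm _) (hHb _)
    nlinarith [norm_nonneg (MemLp.toLp (HH T a f (φ₁ k)) (hHL2 (φ₁ k)))]
  obtain ⟨φ₂, v, hφ₂, hv⟩ :=
    weak_seq_compact (fun k => MemLp.toLp (HH T a f (φ₁ k)) (hHL2 (φ₁ k))) C huub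
  have hNk1 : ∀ k, 1 ≤ φ₁ (φ₂ k) := by
    intro k
    by_contra hcon
    push_neg at hcon
    have h0 : φ₁ (φ₂ k) = 0 := Nat.lt_one_iff.1 hcon
    have hk := hφ₁b (φ₂ k)
    rw [h0] at hk
    have hs00 : s 0 = 0 := by
      simp only [hsdef, GG, ergAvg]
      simp
    rw [hs00] at hk
    linarith
  have hmv : AEStronglyMeasurable (⇑v) μ := Lp.aestronglyMeasurable v
  set ft : X → ℂ := hmv.mk ⇑v with hftdef
  have hftae : ⇑v =ᵐ[μ] ft := hmv.ae_eq_mk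
  have hftsm : StronglyMeasurable ft := hmv.stronglyMeasurable_mk
  have hftL2 : MemLp ft 2 μ := MemLp.ae_eq hftae (Lp.memLp v)
  have hkey : ∀ (q : X → ℂ) (hq : MemLp q 2 μ) (k : ℕ),
      ∫ x, HH T a f (φ₁ (φ₂ k)) x * conj (q x) ∂μ
        = conj ⟪MemLp.toLp (HH T a f (φ₁ (φ₂ k))) (hHL2 (φ₁ (φ₂ k))), MemLp.toLp q hq⟫ := by
    intro q hq k
    rw [L2.inner_def, ← integral_conj]
    refine integral_congr_ae ?_
    filter_upwards [(hHL2 (φ₁ (φ₂ k))).coeFn_toLp, hq.coeFn_toLp] with x h1 h2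
    rw [RCLike.inner_apply, h1, h2, map_mul, Complex.conj_conj, mul_comm]
  have hkeyv : ∀ (q : X → ℂ) (hq : MemLp q 2 μ),
      ∫ x, ft x * conj (q x) ∂μ = conj ⟪v, MemLp.toLp q hq⟫ := by
    intro q hq
    rw [L2.inner_def, ← integral_conj]
    refine integral_congr_ae ?_
    filter_upwards [hftae, hq.coeFn_toLp] with x h1 h2
    rw [RCLike.inner_apply, h1, h2, map_mul, Complex.conj_conj, mul_comm]
  have hbridge : ∀ (q : X → ℂ), MemLp q 2 μ →
      Tendsto (fun k => ∫ x, HH T a f (φ₁ (φ₂ k)) x * conj (q x) ∂μ) atTop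
        (𝓝 (∫ x, ft x * conj (q x) ∂μ)) := by
    intro q hq
    simp only [hkey q hq, hkeyv q hq]
    exact (Complex.continuous_conj.tendsto _).comp (hv (MemLp.toLp q hq))
  have hGint : ∀ N, ∫ y, GG T a f N y ∂μ = 0 := by
    intro N
    have hterm : ∀ n : ℕ, Integrable (fun x => f (T (a n) x)) μ := fun n =>
      (memLp_top_of_bound (hfm.comp_quasiMeasurePreserving (hT (a n)).quasiMeasurePreserving) C
        (erg_ae_fwd μ T hT (a n) hfC)).integrable le_top
    calc ∫ y, GG T a f N y ∂μ
        = (N : ℂ)⁻¹ * ∑ n ∈ Finset.Icc 1 N, ∫ y, f (T (a n) y) ∂μ := by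
          simp only [GG, ergAvg]
          rw [integral_const_mul, integral_finset_sum _ fun n _ => hterm n]
      _ = 0 := by
          rw [Finset.sum_congr rfl fun n _ => (erg_int_comp μ T hT hT0 hTadd (a n) f).trans hf0]
          simp
  have hHint0 : ∀ N, 1 ≤ N → ∫ x, HH T a f N x ∂μ = 0 := by
    intro N hN
    have h1 := erg_swap μ T a hT hT0 hTadd N (fun y => conj (GG T a f N y)) (fun _ => (1 : ℂ)) C 1
      (hGmc N) (hGbc N) aestronglyMeasurable_const (Eventually.of_forall fun x => by simp)
    have hones : ∀ y : X, ergAvg T a (fun _ => (1 : ℂ)) N y = 1 := by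
      intro y
      have hNne : ((N : ℂ)) ≠ 0 := Nat.cast_ne_zero.2 (by omega)
      simp only [ergAvg, Finset.sum_const, Nat.card_Icc, Nat.add_sub_cancel, nsmul_eq_mul, mul_one]
      field_simp
    calc ∫ x, HH T a f N x ∂μ
        = ∫ x, ergAvg T (fun n => -(a n)) (fun y => conj (GG T a f N y)) N x * (fun _ => (1:ℂ)) x ∂μ := by
          simp [HH]
      _ = ∫ y, conj (GG T a f N y) * ergAvg T a (fun _ => (1:ℂ)) N y ∂μ := h1
      _ = ∫ y, conj (GG T a f N y) ∂μ := by
          refine integral_congr_ae (Eventually.of_forall fun y => ?_)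
          beta_reduce
          rw [hones y, mul_one]
      _ = 0 := by rw [integral_conj, hGint N, map_zero]
  have hft0 : ∫ x, ft x ∂μ = 0 := by
    have h1 := hbridge (fun _ => (1 : ℂ)) (memLp_const 1)
    have h2 : (fun k => ∫ x, HH T a f (φ₁ (φ₂ k)) x * conj ((fun _ => (1:ℂ)) x) ∂μ)
        = fun _ => (0 : ℂ) := by
      funext k
      simp only [map_one, mul_one]
      exact hHint0 _ (hNk1 k)
    rw [h2] at h1
    have h3 := tendsto_nhds_unique h1 tendsto_const_nhds
    simpa using h3
  have hsself : ∀ N, ∫ y, conj (GG T a f N y) * GG T a f N y ∂μ = ((s N : ℝ) : ℂ) := by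
    intro N
    rw [show ((s N : ℝ) : ℂ) = ∫ x, ((‖GG T a f N x‖ ^ 2 : ℝ) : ℂ) ∂μ from by
      simp only [hsdef]; exact integral_ofReal.symm]
    refine integral_congr_ae (Eventually.of_forall fun y => ?_)
    beta_reduce
    rw [RCLike.conj_mul]
    norm_cast
  have hAiden : ∀ k, ∫ x, HH T a f (φ₁ (φ₂ k)) x * f x ∂μ = ((s (φ₁ (φ₂ k)) : ℝ) : ℂ) := by
    intro k
    have h1 := erg_swap μ T a hT hT0 hTadd (φ₁ (φ₂ k)) (fun y => conj (GG T a f (φ₁ (φ₂ k)) y)) f C C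
      (hGmc _) (hGbc _) hfm hfC
    calc ∫ x, HH T a f (φ₁ (φ₂ k)) x * f x ∂μ
        = ∫ y, conj (GG T a f (φ₁ (φ₂ k)) y) * ergAvg T a f (φ₁ (φ₂ k)) y ∂μ := h1
      _ = ((s (φ₁ (φ₂ k)) : ℝ) : ℂ) := hsself _
  have hconjfL2 : MemLp (fun x => conj (f x)) 2 μ :=
    (memLp_top_of_bound (Complex.continuous_conj.comp_aestronglyMeasurable hfm) C
      (hfC.mono fun x hx => by simpa using hx)).mono_exponent le_top
  have hpos1 : Tendsto (fun k => ((s (φ₁ (φ₂ k)) : ℝ) : ℂ)) atTop (𝓝 (∫ x, ft x * f x ∂μ)) := by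
    have h1 := hbridge (fun x => conj (f x)) hconjfL2
    simp only [Complex.conj_conj] at h1
    have h2 : (fun k => ∫ x, HH T a f (φ₁ (φ₂ k)) x * f x ∂μ)
        = fun k => ((s (φ₁ (φ₂ k)) : ℝ) : ℂ) := funext hAiden
    rw [h2] at h1
    exact h1
  have hre : Tendsto (fun k => s (φ₁ (φ₂ k))) atTop (𝓝 ((∫ x, ft x * f x ∂μ).re)) := by
    have h1 := (Complex.continuous_re.tendsto _).comp hpos1
    simpa [Function.comp_def] using h1
  have hrepos : 0 < (∫ x, ft x * f x ∂μ).re :=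
    lt_of_lt_of_le hb0 (ge_of_tendsto hre (Eventually.of_forall fun k => (hφ₁b (φ₂ k)).le))
  have hSm : ∀ m : ℕ, μ {x | C + 1 / ((m : ℝ) + 1) ≤ ‖ft x‖} = 0 := by
    intro m
    set ε : ℝ := 1 / ((m : ℝ) + 1) with hε
    have hεpos : 0 < ε := by positivity
    set S : Set X := {x | C + ε ≤ ‖ft x‖} with hS
    have hSmeas : MeasurableSet S :=
      measurableSet_le measurable_const hftsm.measurable.norm
    have hqL2 : MemLp (S.indicator ft) 2 μ := hftL2.indicator hSmeas
    have hlim := hbridge (S.indicator ft) hqL2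
    have hftint : Integrable ft μ := hftL2.integrable one_le_two
    have hft2int : Integrable (fun x => ‖ft x‖ ^ 2) μ :=
      (memLp_two_iff_integrable_sq_norm hftL2.1).1 hftL2
    have hI1int : Integrable (S.indicator fun x => ‖ft x‖ ^ 2) μ := hft2int.indicator hSmeas
    have hI2int : Integrable (S.indicator fun x => ‖ft x‖) μ := hftint.norm.indicator hSmeas
    set I1 : ℝ := ∫ x, S.indicator (fun x => ‖ft x‖ ^ 2) x ∂μ with hI1
    set I2 : ℝ := ∫ x, S.indicator (fun x => ‖ft x‖) x ∂μ with hI2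
    have hI2nn : 0 ≤ I2 := integral_nonneg fun x => Set.indicator_nonneg (fun y _ => norm_nonneg _) x
    have hLHS : ∫ x, ft x * conj (S.indicator ft x) ∂μ = ((I1 : ℝ) : ℂ) := by
      rw [show ((I1 : ℝ) : ℂ) = ∫ x, ((S.indicator (fun x => ‖ft x‖ ^ 2) x : ℝ) : ℂ) ∂μ from by
        simp only [hI1]; exact integral_ofReal.symm]
      refine integral_congr_ae (Eventually.of_forall fun x => ?_)
      by_cases hx : x ∈ S
      · simp only [Set.indicator_of_mem hx]
        rw [Complex.mul_conj']
        norm_cast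
      · simp [Set.indicator_of_notMem hx]
    have hknorm : ∀ k, ‖∫ x, HH T a f (φ₁ (φ₂ k)) x * conj (S.indicator ft x) ∂μ‖ ≤ C * I2 := by
      intro k
      refine le_trans (norm_integral_le_integral_norm _) ?_
      have hnormint : Integrable (fun x => ‖S.indicator ft x‖) μ := (hftint.indicator hSmeas).norm
      calc ∫ x, ‖HH T a f (φ₁ (φ₂ k)) x * conj (S.indicator ft x)‖ ∂μ
          = ∫ x, ‖HH T a f (φ₁ (φ₂ k)) x‖ * ‖S.indicator ft x‖ ∂μ := by
            refine integral_congr_ae (Eventually.of_forall fun x => ?_)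
            beta_reduce
            rw [norm_mul, RCLike.norm_conj]
        _ ≤ ∫ x, C * ‖S.indicator ft x‖ ∂μ := by
            refine integral_mono_ae (Integrable.bdd_mul (c := C) hnormint (hHm _).norm ?_)
              (hnormint.const_mul C) ?_
            · filter_upwards [hHb (φ₁ (φ₂ k))] with x hx
              rwa [norm_norm]
            · filter_upwards [hHb (φ₁ (φ₂ k))] with x hx
              exact mul_le_mul_of_nonneg_right hx (norm_nonneg _)
        _ = C * I2 := by
            rw [integral_const_mul]
            congr 1
            simp only [hI2]
            refine integral_congr_ae (Eventually.of_forall fun x => ?_)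
            beta_reduce
            rw [norm_indicator_eq_indicator_norm]
    have hI1le : I1 ≤ C * I2 := by
      rw [hLHS] at hlim
      have h2 := le_of_tendsto hlim.norm (Eventually.of_forall hknorm)
      calc I1 ≤ |I1| := le_abs_self I1
        _ = ‖((I1 : ℝ) : ℂ)‖ := by rw [Complex.norm_real, Real.norm_eq_abs]
        _ ≤ C * I2 := h2
    have hlow : (C + ε) * I2 ≤ I1 := by
      rw [show (C + ε) * I2 = ∫ x, (C + ε) * S.indicator (fun x => ‖ft x‖) x ∂μ from by
        simp only [hI2]; rw [integral_const_mul]]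
      refine integral_mono_ae (hI2int.const_mul _) hI1int (Eventually.of_forall fun x => ?_)
      by_cases hx : x ∈ S
      · simp only [Set.indicator_of_mem hx]
        have hx' : C + ε ≤ ‖ft x‖ := hx
        nlinarith [norm_nonneg (ft x)]
      · simp [Set.indicator_of_notMem hx]
    have hI20 : I2 = 0 := by nlinarith
    have hμS : (C + ε) * (μ S).toReal ≤ I2 := by
      rw [show (C + ε) * (μ S).toReal = ∫ x, S.indicator (fun _ => C + ε) x ∂μ from by
        rw [integral_indicator_const _ hSmeas, smul_eq_mul, mul_comm, Measure.real]]
      refine integral_mono_ae ((integrable_const _).indicator hSmeas) hI2int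
        (Eventually.of_forall fun x => ?_)
      by_cases hx : x ∈ S
      · simp only [Set.indicator_of_mem hx]
        exact hx
      · simp [Set.indicator_of_notMem hx]
    have htoReal : (μ S).toReal = 0 := by nlinarith [ENNReal.toReal_nonneg (a := μ S)]
    have hfin : μ S ≠ ⊤ := measure_ne_top μ S
    exact ((ENNReal.toReal_eq_zero_iff _).1 htoReal).resolve_right hfin
  have hftb : ∀ᵐ x ∂μ, ‖ft x‖ ≤ C := by
    have hall : ∀ᵐ x ∂μ, ∀ m : ℕ, ¬(C + 1 / ((m : ℝ) + 1) ≤ ‖ft x‖) := by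
      rw [ae_all_iff]
      intro m
      rw [ae_iff]
      simpa only [not_not] using hSm m
    filter_upwards [hall] with x hx
    by_contra hcon
    push_neg at hcon
    obtain ⟨m, hm⟩ := exists_nat_one_div_lt (sub_pos.2 hcon)
    exact hx m (by linarith)
  have hftLtop : MemLp ft ⊤ μ := memLp_top_of_bound hftsm.aestronglyMeasurable C hftb
  have hAm : ∀ N, AEStronglyMeasurable (ergAvg T a ft N) μ :=
    fun N => erg_avg_aesm μ T hT a hftsm.aestronglyMeasurable N
  have hAb : ∀ N, ∀ᵐ x ∂μ, ‖ergAvg T a ft N x‖ ≤ C := fun N =>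
    erg_avg_bound μ T hT a hC.le hftb N
  have hconjavg : ∀ (N : ℕ) (y : X), ergAvg T a (fun z => conj (ft z)) N y = conj (ergAvg T a ft N y) := by
    intro N y
    simp [ergAvg, map_mul, map_sum, map_inv₀, map_natCast]
  have hAcm : ∀ N, AEStronglyMeasurable (fun y => conj (ergAvg T a ft N y)) μ := fun N =>
    Complex.continuous_conj.comp_aestronglyMeasurable (hAm N)
  have hAcb : ∀ N, ∀ᵐ x ∂μ, ‖conj (ergAvg T a ft N x)‖ ≤ C := fun N =>
    (hAb N).mono fun x hx => by simpa using hx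
  have hAcL2 : ∀ N, MemLp (fun y => conj (ergAvg T a ft N y)) 2 μ := fun N =>
    (memLp_top_of_bound (hAcm N) C (hAcb N)).mono_exponent le_top
  have hGL2 : ∀ N, MemLp (GG T a f N) 2 μ := fun N =>
    (memLp_top_of_bound (hGm N) C (hGb N)).mono_exponent le_top
  have hrk : ∀ k, ∫ x, HH T a f (φ₁ (φ₂ k)) x * conj (ft x) ∂μ
      = ⟪MemLp.toLp _ (hGL2 (φ₁ (φ₂ k))), MemLp.toLp _ (hAcL2 (φ₁ (φ₂ k)))⟫ := by
    intro k
    have h1 := erg_swap μ T a hT hT0 hTadd (φ₁ (φ₂ k)) (fun y => conj (GG T a f (φ₁ (φ₂ k)) y))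
      (fun z => conj (ft z)) C C (hGmc _) (hGbc _)
      (Complex.continuous_conj.comp_aestronglyMeasurable hftsm.aestronglyMeasurable)
      (hftb.mono fun x hx => by simpa using hx)
    calc ∫ x, HH T a f (φ₁ (φ₂ k)) x * conj (ft x) ∂μ
        = ∫ y, conj (GG T a f (φ₁ (φ₂ k)) y) * ergAvg T a (fun z => conj (ft z)) (φ₁ (φ₂ k)) y ∂μ := h1
      _ = ∫ y, conj (GG T a f (φ₁ (φ₂ k)) y) * conj (ergAvg T a ft (φ₁ (φ₂ k)) y) ∂μ := by
          refine integral_congr_ae (Eventually.of_forall fun y => ?_)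
          beta_reduce
          rw [hconjavg]
      _ = ⟪MemLp.toLp _ (hGL2 (φ₁ (φ₂ k))), MemLp.toLp _ (hAcL2 (φ₁ (φ₂ k)))⟫ := by
          rw [L2.inner_def]
          refine (integral_congr_ae ?_).symm
          filter_upwards [(hGL2 (φ₁ (φ₂ k))).coeFn_toLp, (hAcL2 (φ₁ (φ₂ k))).coeFn_toLp] with y h2 h3
          rw [RCLike.inner_apply, h2, h3, mul_comm]
  have hCS : ∀ k, ‖∫ x, HH T a f (φ₁ (φ₂ k)) x * conj (ft x) ∂μ‖ ^ 2
      ≤ C ^ 2 * ∫ x, ‖ergAvg T a ft (φ₁ (φ₂ k)) x‖ ^ 2 ∂μ := by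
    intro k
    rw [hrk k]
    have h1 := norm_inner_le_norm (𝕜 := ℂ)
      (MemLp.toLp _ (hGL2 (φ₁ (φ₂ k)))) (MemLp.toLp _ (hAcL2 (φ₁ (φ₂ k))))
    have h2 : ‖MemLp.toLp _ (hGL2 (φ₁ (φ₂ k)))‖ ^ 2 ≤ C ^ 2 := by
      rw [hnormsq]
      exact hsqle _ (hGm _) (hGb _)
    have h3 : ‖MemLp.toLp _ (hAcL2 (φ₁ (φ₂ k)))‖ ^ 2 = ∫ x, ‖ergAvg T a ft (φ₁ (φ₂ k)) x‖ ^ 2 ∂μ := by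
      rw [hnormsq]
      refine integral_congr_ae (Eventually.of_forall fun x => ?_)
      beta_reduce
      rw [RCLike.norm_conj]
    nlinarith [norm_nonneg (MemLp.toLp _ (hGL2 (φ₁ (φ₂ k)))),
      norm_nonneg (MemLp.toLp _ (hAcL2 (φ₁ (φ₂ k)))),
      norm_nonneg (⟪MemLp.toLp _ (hGL2 (φ₁ (φ₂ k))), MemLp.toLp _ (hAcL2 (φ₁ (φ₂ k)))⟫)]
  have hqnn : 0 ≤ ∫ x, ‖ft x‖ ^ 2 ∂μ := integral_nonneg fun x => by positivity
  have hqpos : 0 < ∫ x, ‖ft x‖ ^ 2 ∂μ := by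
    rcases hqnn.lt_or_eq with h | h
    · exact h
    · exfalso
      have hzero : (fun x => ‖ft x‖ ^ 2) =ᵐ[μ] 0 :=
        (integral_eq_zero_iff_of_nonneg (fun x => by positivity)
          ((memLp_two_iff_integrable_sq_norm hftL2.1).1 hftL2)).1 h.symm
      have hftz : ft =ᵐ[μ] 0 := by
        filter_upwards [hzero] with x hx
        have h4 : ‖ft x‖ ^ 2 = 0 := hx
        have h5 : ‖ft x‖ = 0 := by nlinarith [norm_nonneg (ft x)]
        simpa using h5
      have hzz : ∫ x, ft x * f x ∂μ = 0 := by
        rw [integral_congr_ae (show (fun x => ft x * f x) =ᵐ[μ] fun _ => 0 from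
          hftz.mono fun x hx => by simp [hx])]
        simp
      rw [hzz] at hrepos
      simp at hrepos
  have hftself : ∫ x, ft x * conj (ft x) ∂μ = ((∫ x, ‖ft x‖ ^ 2 ∂μ : ℝ) : ℂ) := by
    rw [show ((∫ x, ‖ft x‖ ^ 2 ∂μ : ℝ) : ℂ) = ∫ x, ((‖ft x‖ ^ 2 : ℝ) : ℂ) ∂μ from
      integral_ofReal.symm]
    refine integral_congr_ae (Eventually.of_forall fun x => ?_)
    beta_reduce
    rw [Complex.mul_conj']
    norm_cast
  have hlimr := hbridge ft hftL2
  rw [hftself] at hlimr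
  have hlimn : Tendsto (fun k => ‖∫ x, HH T a f (φ₁ (φ₂ k)) x * conj (ft x) ∂μ‖) atTop
      (𝓝 (∫ x, ‖ft x‖ ^ 2 ∂μ)) := by
    have h1 := hlimr.norm
    rwa [Complex.norm_real, Real.norm_eq_abs, abs_of_nonneg hqnn] at h1
  have hev : ∀ᶠ k in atTop,
      (∫ x, ‖ft x‖ ^ 2 ∂μ) / 2 ≤ ‖∫ x, HH T a f (φ₁ (φ₂ k)) x * conj (ft x) ∂μ‖ :=
    hlimn.eventually (le_mem_nhds (half_lt_self hqpos))
  have hfinal : 0 < Filter.limsup (fun k => ∫ x, ‖ergAvg T a ft (φ₁ (φ₂ k)) x‖ ^ 2 ∂μ) atTop := by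
    have hd : 0 < ((∫ x, ‖ft x‖ ^ 2 ∂μ) / 2) ^ 2 / C ^ 2 := by positivity
    refine lt_of_lt_of_le hd (Filter.le_limsup_of_frequently_le ?_ ?_)
    · refine (hev.mono fun k hk => ?_).frequently
      beta_reduce
      have h1 := hCS k
      have h2 : ((∫ x, ‖ft x‖ ^ 2 ∂μ) / 2) ^ 2
          ≤ ‖∫ x, HH T a f (φ₁ (φ₂ k)) x * conj (ft x) ∂μ‖ ^ 2 :=
        pow_le_pow_left₀ (by positivity) hk 2
      rw [div_le_iff₀ (by positivity : (0:ℝ) < C ^ 2)]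
      calc ((∫ x, ‖ft x‖ ^ 2 ∂μ) / 2) ^ 2
          ≤ ‖∫ x, HH T a f (φ₁ (φ₂ k)) x * conj (ft x) ∂μ‖ ^ 2 := h2
        _ ≤ C ^ 2 * ∫ x, ‖ergAvg T a ft (φ₁ (φ₂ k)) x‖ ^ 2 ∂μ := h1
        _ = (∫ x, ‖ergAvg T a ft (φ₁ (φ₂ k)) x‖ ^ 2 ∂μ) * C ^ 2 := mul_comm _ _
    · exact Filter.isBoundedUnder_of ⟨C ^ 2, fun k => hsqle _ (hAm _) (hAb _)⟩
  refine ⟨fun k => φ₁ (φ₂ k), fun k => GG T a f (φ₁ (φ₂ k)), ft, C,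
    (hφ₁.comp hφ₂).tendsto_atTop, ?_, hftLtop, hft0, ?_, ?_, by simpa only [ergAvg] using hfinal⟩
  · intro k
    exact ⟨memLp_top_of_bound (hGm _) C (hGb _), hGb _⟩
  · intro q hq
    have hb2 := hbridge q hq
    simp only [HH, GG, ergAvg] at hb2
    simp only [GG, ergAvg]
    exact hb2
  · have hcomm : ∫ x, f x * ft x ∂μ = ∫ x, ft x * f x ∂μ :=
      integral_congr_ae (Eventually.of_forall fun x => mul_comm _ _)
    rw [hcomm]
    exact hrepos
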